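/- A real number θ is a root of μ(G) if and only if there exists a vertex j with m_θ(G∖j) = m_θ(G) − 1 (i.e., the set 0_{θ,G} of θ-essential vertices is nonempty). -/

import Mathlib

open Polynomial
open scoped Classical

/-- A matching of the weighted graph with edge weights `lam`, inside the vertex set `A`:
a set of pairs `(j,k)` with `j < k`, `lam j k ≠ 0`, endpoints in `A`,
no two pairs sharing a vertex. -/
def IsMatching {n : ℕ} (lam : Fin n → Fin n → ℝ) (A : Finset (Fin n))
    (M : Finset (Fin n × Fin n)) : Prop :=
  (∀ e ∈ M, e.1 < e.2 ∧ lam e.1 e.2 ≠ 0 ∧ e.1 ∈ A ∧ e.2 ∈ A) ∧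
  ∀ e ∈ M, ∀ f ∈ M, e ≠ f → e.1 ≠ f.1 ∧ e.1 ≠ f.2 ∧ e.2 ≠ f.1 ∧ e.2 ≠ f.2

/-- The vertices covered by a matching. -/
def mVerts {n : ℕ} (M : Finset (Fin n × Fin n)) : Finset (Fin n) :=
  M.image Prod.fst ∪ M.image Prod.snd

/-- The finite set of matchings inside the vertex set `A`. -/
noncomputable def matchings {n : ℕ} (lam : Fin n → Fin n → ℝ) (A : Finset (Fin n)) :
    Finset (Finset (Fin n × Fin n)) :=
  Finset.univ.filter fun M => IsMatching lam A M

/-- The weighted matching polynomial of the induced weighted subgraph on the vertex set `A`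
(the matching polynomial of the empty graph is `1`). -/
noncomputable def mu {n : ℕ} (r : Fin n → ℝ) (lam : Fin n → Fin n → ℝ)
    (A : Finset (Fin n)) : Polynomial ℝ :=
  ∑ M ∈ matchings lam A,
    (∏ i ∈ A \ mVerts M, (X - C (r i))) * C (∏ e ∈ M, lam e.1 e.2)

/-- The multivariate matching polynomial evaluated at the complex numbers `x 1, …, x n`. -/
noncomputable def muC {n : ℕ} (lam : Fin n → Fin n → ℝ) (x : Fin n → ℂ) : ℂ :=
  ∑ M ∈ matchings lam (Finset.univ : Finset (Fin n)),
    (∏ i ∈ Finset.univ \ mVerts M, x i) * ∏ e ∈ M, (lam e.1 e.2 : ℂ)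

/-- The constant `B_G`: for `n ≥ 3` the maximum over vertices `j` and sets
`A ⊆ [n] ∖ {j}` with `|A| = n - 2` of `∑_{k ∈ A} (-λ_{jk})`; `-λ_{12}/4` for `n = 2`;
`0` for `n = 1`. -/
noncomputable def BG (n : ℕ) (lam : Fin n → Fin n → ℝ) : ℝ :=
  if 3 ≤ n then
    sSup {S : ℝ | ∃ j : Fin n, ∃ A : Finset (Fin n),
      j ∉ A ∧ A.card = n - 2 ∧ S = ∑ k ∈ A, -lam j k}
  else if h : n = 2 then -lam ⟨0, by omega⟩ ⟨1, by omega⟩ / 4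
  else 0

/-- `l` is a path from `i` to `j` inside the vertex set `A`: a nonempty list of distinct
vertices of `A`, starting at `i`, ending at `j`, with consecutive vertices joined by
edges of nonzero weight. -/
def IsPathIn {n : ℕ} (lam : Fin n → Fin n → ℝ) (A : Finset (Fin n)) (i j : Fin n)
    (l : List (Fin n)) : Prop :=
  l ≠ [] ∧ l.Nodup ∧ (∀ v ∈ l, v ∈ A) ∧ l.head? = some i ∧ l.getLast? = some j ∧
    l.Chain' fun u v => lam u v ≠ 0

/-- `λ_c`: the product of `-λ_e` over the edges `e` of the path `c` (equal to `1` for a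
trivial path). -/
def pathWeight {n : ℕ} (lam : Fin n → Fin n → ℝ) (l : List (Fin n)) : ℝ :=
  ((l.zip l.tail).map fun p => -lam p.1 p.2).prod

/-- A real polynomial viewed as a rational function. -/
noncomputable def toRF (p : Polynomial ℝ) : RatFunc ℝ :=
  algebraMap (Polynomial ℝ) (RatFunc ℝ) p

/-- The graph continued fraction `α_v = μ(A)/μ(A ∖ v)` as a rational function. -/
noncomputable def alpha {n : ℕ} (r : Fin n → ℝ) (lam : Fin n → Fin n → ℝ) (v : Fin n)
    (A : Finset (Fin n)) : RatFunc ℝ :=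
  toRF (mu r lam A) / toRF (mu r lam (A.erase v))

/-- `λ_{i∼j} = -(∑_{c ∈ [i→j]} λ_c · μ(A∖c)²) / μ(A∖{i,j})²` as a rational function. -/
noncomputable def lamSim {n : ℕ} (r : Fin n → ℝ) (lam : Fin n → Fin n → ℝ) (i j : Fin n)
    (A : Finset (Fin n)) : RatFunc ℝ :=
  -(∑ᶠ l ∈ {l : List (Fin n) | IsPathIn lam A i j l},
      toRF (C (pathWeight lam l) * mu r lam (A \ l.toFinset) ^ 2)) /
    toRF (mu r lam ((A.erase i).erase j)) ^ 2

/-- The value of a rational function at `θ`, taken after cancelling common factors;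
`none` encodes the value `∞` (a pole). -/
noncomputable def valAt (f : RatFunc ℝ) (θ : ℝ) : Option ℝ :=
  if f.denom.eval θ = 0 then none else some (f.num.eval θ / f.denom.eval θ)

/-- The set `0_{θ,A}` of θ-essential vertices: `m_θ(A∖v) = m_θ(A) - 1`. -/
def zeroSet {n : ℕ} (r : Fin n → ℝ) (lam : Fin n → Fin n → ℝ) (θ : ℝ)
    (A : Finset (Fin n)) : Set (Fin n) :=
  {v | v ∈ A ∧
    (mu r lam A).rootMultiplicity θ = (mu r lam (A.erase v)).rootMultiplicity θ + 1}

/-- The set `∞_{θ,A}`: `m_θ(A∖v) = m_θ(A) + 1`. -/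
def infSet {n : ℕ} (r : Fin n → ℝ) (lam : Fin n → Fin n → ℝ) (θ : ℝ)
    (A : Finset (Fin n)) : Set (Fin n) :=
  {v | v ∈ A ∧
    (mu r lam (A.erase v)).rootMultiplicity θ = (mu r lam A).rootMultiplicity θ + 1}

/-- The set `+_{θ,A}`: `m_θ(A∖v) = m_θ(A)` and `α_v(A)(θ) > 0`. -/
def plusSet {n : ℕ} (r : Fin n → ℝ) (lam : Fin n → Fin n → ℝ) (θ : ℝ)
    (A : Finset (Fin n)) : Set (Fin n) :=
  {v | v ∈ A ∧
    (mu r lam (A.erase v)).rootMultiplicity θ = (mu r lam A).rootMultiplicity θ ∧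
    ∃ t : ℝ, valAt (alpha r lam v A) θ = some t ∧ 0 < t}

/-- The set `−_{θ,A}`: `m_θ(A∖v) = m_θ(A)` and `α_v(A)(θ) < 0`. -/
def minusSet {n : ℕ} (r : Fin n → ℝ) (lam : Fin n → Fin n → ℝ) (θ : ℝ)
    (A : Finset (Fin n)) : Set (Fin n) :=
  {v | v ∈ A ∧
    (mu r lam (A.erase v)).rootMultiplicity θ = (mu r lam A).rootMultiplicity θ ∧
    ∃ t : ℝ, valAt (alpha r lam v A) θ = some t ∧ t < 0}

/-- The frontier `∂0_{θ,A}`: vertices not in `0_{θ,A}` with a neighbor in `0_{θ,A}`. -/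
def frontierZero {n : ℕ} (r : Fin n → ℝ) (lam : Fin n → Fin n → ℝ) (θ : ℝ)
    (A : Finset (Fin n)) : Set (Fin n) :=
  {v | v ∈ A ∧ v ∉ zeroSet r lam θ A ∧ ∃ w ∈ zeroSet r lam θ A, lam v w ≠ 0}

/-- The underlying simple graph: edges are the pairs with nonzero edge weight. -/
def wGraph {n : ℕ} (lam : Fin n → Fin n → ℝ) : SimpleGraph (Fin n) :=
  SimpleGraph.fromRel fun j k => lam j k ≠ 0

section StmtSevenAux

open Finset

variable {n : ℕ}

lemma mem_matchings' {lam : Fin n → Fin n → ℝ} {A : Finset (Fin n)}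
    {M : Finset (Fin n × Fin n)} : M ∈ matchings lam A ↔ IsMatching lam A M := by
  simp [matchings]

lemma mem_mVerts' {M : Finset (Fin n × Fin n)} {v : Fin n} :
    v ∈ mVerts M ↔ ∃ e ∈ M, e.1 = v ∨ e.2 = v := by
  constructor
  · intro hv
    rcases Finset.mem_union.1 hv with h | h
    · obtain ⟨e, he, h⟩ := Finset.mem_image.1 h; exact ⟨e, he, Or.inl h⟩
    · obtain ⟨e, he, h⟩ := Finset.mem_image.1 h; exact ⟨e, he, Or.inr h⟩
  · rintro ⟨e, he, h | h⟩
    · exact Finset.mem_union.2 (Or.inl (Finset.mem_image.2 ⟨e, he, h⟩))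
    · exact Finset.mem_union.2 (Or.inr (Finset.mem_image.2 ⟨e, he, h⟩))

lemma mVerts_subset' {lam : Fin n → Fin n → ℝ} {A : Finset (Fin n)}
    {M : Finset (Fin n × Fin n)} (hM : IsMatching lam A M) : mVerts M ⊆ A := by
  intro v hv
  rcases mem_mVerts'.1 hv with ⟨e, he, h | h⟩
  · exact h ▸ (hM.1 e he).2.2.1
  · exact h ▸ (hM.1 e he).2.2.2

lemma coords_ne' {lam : Fin n → Fin n → ℝ} {B : Finset (Fin n)}
    {M' : Finset (Fin n × Fin n)} (hM' : IsMatching lam B M') {f : Fin n × Fin n}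
    (hf : f ∈ M') {v : Fin n} (hv : v ∉ B) : f.1 ≠ v ∧ f.2 ≠ v :=
  ⟨fun h => hv (h ▸ (hM'.1 f hf).2.2.1), fun h => hv (h ▸ (hM'.1 f hf).2.2.2)⟩

/-- Matchings avoiding `u` are exactly the matchings of `A.erase u`. -/
lemma filter_matchings_eq {lam : Fin n → Fin n → ℝ} {A : Finset (Fin n)} {u : Fin n} :
    (matchings lam A).filter (fun M => u ∉ mVerts M) = matchings lam (A.erase u) := by
  ext M
  simp only [Finset.mem_filter, mem_matchings']
  constructor
  · rintro ⟨hM, hu⟩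
    refine ⟨fun e he => ?_, hM.2⟩
    obtain ⟨h1, h2, h3, h4⟩ := hM.1 e he
    refine ⟨h1, h2, Finset.mem_erase.2 ⟨?_, h3⟩, Finset.mem_erase.2 ⟨?_, h4⟩⟩
    · exact fun h => hu (mem_mVerts'.2 ⟨e, he, Or.inl h⟩)
    · exact fun h => hu (mem_mVerts'.2 ⟨e, he, Or.inr h⟩)
  · intro hM
    refine ⟨⟨fun e he => ?_, hM.2⟩, fun h => ?_⟩
    · obtain ⟨h1, h2, h3, h4⟩ := hM.1 e he
      exact ⟨h1, h2, Finset.mem_of_mem_erase h3, Finset.mem_of_mem_erase h4⟩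
    · rcases mem_mVerts'.1 h with ⟨e, he, h' | h'⟩
      · exact (Finset.mem_erase.1 (hM.1 e he).2.2.1).1 h'
      · exact (Finset.mem_erase.1 (hM.1 e he).2.2.2).1 h'

lemma empty_mem_matchings' {lam : Fin n → Fin n → ℝ} {A : Finset (Fin n)} :
    (∅ : Finset (Fin n × Fin n)) ∈ matchings lam A := by
  refine mem_matchings'.2 ⟨fun e he => absurd he (Finset.notMem_empty e),
    fun e he => absurd he (Finset.notMem_empty e)⟩

lemma mu_eq_prod_add (r : Fin n → ℝ) (lam : Fin n → Fin n → ℝ) (A : Finset (Fin n)) :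
    mu r lam A = (∏ i ∈ A, (X - C (r i))) +
      ∑ M ∈ (matchings lam A).erase ∅,
        (∏ i ∈ A \ mVerts M, (X - C (r i))) * C (∏ e ∈ M, lam e.1 e.2) := by
  rw [mu, ← Finset.add_sum_erase _ _ (empty_mem_matchings' (lam := lam) (A := A))]
  congr 1
  simp [mVerts]

lemma degree_term_lt {r : Fin n → ℝ} {lam : Fin n → Fin n → ℝ} {A : Finset (Fin n)}
    {M : Finset (Fin n × Fin n)} (hM : M ∈ (matchings lam A).erase ∅) :
    ((∏ i ∈ A \ mVerts M, (X - C (r i))) * C (∏ e ∈ M, lam e.1 e.2)).degree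
      < (A.card : WithBot ℕ) := by
  obtain ⟨hne, hM⟩ := Finset.mem_erase.1 hM
  have hsub : mVerts M ⊆ A := mVerts_subset' (mem_matchings'.1 hM)
  obtain ⟨e, he⟩ := Finset.nonempty_iff_ne_empty.2 hne
  have hv : e.1 ∈ mVerts M := mem_mVerts'.2 ⟨e, he, Or.inl rfl⟩
  have hss : A \ mVerts M ⊂ A :=
    (Finset.ssubset_iff_of_subset Finset.sdiff_subset).2
      ⟨e.1, hsub hv, by simp [hv]⟩
  have hcard : (A \ mVerts M).card < A.card := Finset.card_lt_card hss
  have hprod : (∏ i ∈ A \ mVerts M, (X - C (r i))).degree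
      = ((A \ mVerts M).card : WithBot ℕ) := by
    rw [Polynomial.degree_prod]
    simp
  calc ((∏ i ∈ A \ mVerts M, (X - C (r i))) * C (∏ e ∈ M, lam e.1 e.2)).degree
      ≤ (∏ i ∈ A \ mVerts M, (X - C (r i))).degree + (C (∏ e ∈ M, lam e.1 e.2)).degree :=
        Polynomial.degree_mul_le _ _
    _ ≤ ((A \ mVerts M).card : WithBot ℕ) + 0 := by
        rw [hprod]; exact add_le_add le_rfl Polynomial.degree_C_le
    _ = ((A \ mVerts M).card : WithBot ℕ) := add_zero _
    _ < (A.card : WithBot ℕ) := by exact_mod_cast hcard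

lemma degree_prod_X_sub_C' (r : Fin n → ℝ) (A : Finset (Fin n)) :
    (∏ i ∈ A, (X - C (r i))).degree = (A.card : WithBot ℕ) := by
  rw [Polynomial.degree_prod]; simp

lemma mu_monic (r : Fin n → ℝ) (lam : Fin n → Fin n → ℝ) (A : Finset (Fin n)) :
    (mu r lam A).Monic := by
  rw [mu_eq_prod_add]
  have hm : (∏ i ∈ A, (X - C (r i))).Monic :=
    monic_prod_of_monic _ _ fun i _ => monic_X_sub_C _
  refine hm.add_of_left ?_
  rw [degree_prod_X_sub_C']
  refine lt_of_le_of_lt (Polynomial.degree_sum_le _ _) ?_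
  rw [Finset.sup_lt_iff (by exact_mod_cast WithBot.bot_lt_coe _)]
  exact fun M hM => degree_term_lt hM

lemma mu_degree (r : Fin n → ℝ) (lam : Fin n → Fin n → ℝ) (A : Finset (Fin n)) :
    (mu r lam A).degree = (A.card : WithBot ℕ) := by
  rw [mu_eq_prod_add]
  rw [Polynomial.degree_add_eq_left_of_degree_lt, degree_prod_X_sub_C']
  rw [degree_prod_X_sub_C']
  refine lt_of_le_of_lt (Polynomial.degree_sum_le _ _) ?_
  rw [Finset.sup_lt_iff (by exact_mod_cast WithBot.bot_lt_coe _)]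
  exact fun M hM => degree_term_lt hM

lemma mu_ne_zero (r : Fin n → ℝ) (lam : Fin n → Fin n → ℝ) (A : Finset (Fin n)) :
    mu r lam A ≠ 0 :=
  (mu_monic r lam A).ne_zero

/-- Orient a pair of distinct vertices. -/
def edgeOf (u k : Fin n) : Fin n × Fin n := if u < k then (u, k) else (k, u)

/-- The edge of `M` containing `u` (junk if none). -/
noncomputable def theEdge (u : Fin n) (M : Finset (Fin n × Fin n)) : Fin n × Fin n :=
  if h : ∃ e ∈ M, e.1 = u ∨ e.2 = u then h.choose else (u, u)

/-- The other endpoint of `e` besides `u`. -/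
def otherEnd (u : Fin n) (e : Fin n × Fin n) : Fin n := if e.1 = u then e.2 else e.1

lemma edgeOf_cases {u k : Fin n} (h : u ≠ k) :
    (edgeOf u k = (u, k) ∧ u < k) ∨ (edgeOf u k = (k, u) ∧ k < u) := by
  rcases lt_or_gt_of_ne h with h' | h'
  · exact Or.inl ⟨if_pos h', h'⟩
  · refine Or.inr ⟨?_, h'⟩
    rw [edgeOf, if_neg (not_lt.2 h'.le)]

lemma theEdge_spec {u : Fin n} {M : Finset (Fin n × Fin n)} (h : u ∈ mVerts M) :
    theEdge u M ∈ M ∧ ((theEdge u M).1 = u ∨ (theEdge u M).2 = u) := by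
  have h' : ∃ e ∈ M, e.1 = u ∨ e.2 = u := mem_mVerts'.1 h
  rw [theEdge, dif_pos h']
  exact ⟨h'.choose_spec.1, h'.choose_spec.2⟩

lemma edge_unique {lam : Fin n → Fin n → ℝ} {A : Finset (Fin n)}
    {M : Finset (Fin n × Fin n)} (hM : IsMatching lam A M) {u : Fin n}
    {e f : Fin n × Fin n} (he : e ∈ M) (hf : f ∈ M)
    (hu : e.1 = u ∨ e.2 = u) (hv : f.1 = u ∨ f.2 = u) : e = f := by
  by_contra hne
  obtain ⟨h1, h2, h3, h4⟩ := hM.2 e he f hf hne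
  rcases hu with h | h <;> rcases hv with h' | h'
  · exact h1 (h.trans h'.symm)
  · exact h2 (h.trans h'.symm)
  · exact h3 (h.trans h'.symm)
  · exact h4 (h.trans h'.symm)

/-- The sum over matchings of `A` using `u`, re-indexed by the partner of `u` and the rest. -/
lemma part2_core (r : Fin n → ℝ) (lam : Fin n → Fin n → ℝ)
    (hsym : ∀ j k, lam j k = lam k j) {A : Finset (Fin n)} {u : Fin n} (hu : u ∈ A) :
    ∑ x ∈ ((A.erase u).filter fun k => lam u k ≠ 0).sigma
        (fun k => matchings lam ((A.erase u).erase k)),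
      C (lam u x.1) *
        ((∏ i ∈ ((A.erase u).erase x.1) \ mVerts x.2, (X - C (r i))) *
          C (∏ e ∈ x.2, lam e.1 e.2))
    = ∑ M ∈ (matchings lam A).filter (fun M => u ∈ mVerts M),
        (∏ i ∈ A \ mVerts M, (X - C (r i))) * C (∏ e ∈ M, lam e.1 e.2) := by
  have key : ∀ (k : Fin n), k ∈ (A.erase u).filter (fun k => lam u k ≠ 0) →
      ∀ M' ∈ matchings lam ((A.erase u).erase k),
      (u ≠ k) ∧ (edgeOf u k).1 < (edgeOf u k).2 ∧
      lam (edgeOf u k).1 (edgeOf u k).2 = lam u k ∧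
      ((edgeOf u k).1 = u ∨ (edgeOf u k).2 = u) ∧
      ((edgeOf u k).1 = k ∨ (edgeOf u k).2 = k) ∧
      edgeOf u k ∉ M' := by
    intro k hk M' hM'
    have hk' := Finset.mem_filter.1 hk
    have hku : k ≠ u := (Finset.mem_erase.1 hk'.1).1
    have hM'' := mem_matchings'.1 hM'
    have hnm : edgeOf u k ∉ M' := by
      intro hmem
      rcases edgeOf_cases hku.symm with ⟨h, _⟩ | ⟨h, _⟩
      · have := (hM''.1 _ hmem).2.2.1
        rw [h] at this
        exact (Finset.mem_erase.1 (Finset.mem_of_mem_erase this)).1 rfl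
      · have := (hM''.1 _ hmem).2.2.2
        rw [h] at this
        exact (Finset.mem_erase.1 (Finset.mem_of_mem_erase this)).1 rfl
    rcases edgeOf_cases hku.symm with ⟨h, hlt⟩ | ⟨h, hlt⟩
    · rw [h]
      exact ⟨hku.symm, hlt, rfl, Or.inl rfl, Or.inr rfl, by rw [← h]; exact hnm⟩
    · rw [h]
      exact ⟨hku.symm, hlt, hsym k u, Or.inr rfl, Or.inl rfl, by rw [← h]; exact hnm⟩
  refine Finset.sum_bij' (fun x _ => insert (edgeOf u x.1) x.2)
    (fun M _ => ⟨otherEnd u (theEdge u M), M.erase (theEdge u M)⟩) ?_ ?_ ?_ ?_ ?_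
  · -- maps into matchings of A using u
    rintro ⟨k, M'⟩ hx
    dsimp only
    obtain ⟨hk, hM'⟩ := Finset.mem_sigma.1 hx
    obtain ⟨hku, hlt, hlam, hcu, hck, hnm⟩ := key k hk M' hM'
    have hk' := Finset.mem_filter.1 hk
    have hkA : k ∈ A := Finset.mem_of_mem_erase hk'.1
    have hM'' := mem_matchings'.1 hM'
    have hcoords : ∀ f ∈ M', f.1 ≠ u ∧ f.2 ≠ u ∧ f.1 ≠ k ∧ f.2 ≠ k := by
      intro f hf
      have h1 := coords_ne' hM'' hf (v := u)
        (by simp)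
      have h2 := coords_ne' hM'' hf (v := k)
        (fun h => (Finset.mem_erase.1 h).1 rfl)
      exact ⟨h1.1, h1.2, h2.1, h2.2⟩
    refine Finset.mem_filter.2 ⟨mem_matchings'.2 ⟨?_, ?_⟩, ?_⟩
    · intro f hf
      rcases Finset.mem_insert.1 hf with rfl | hf'
      · refine ⟨hlt, by rw [hlam]; exact hk'.2, ?_, ?_⟩
        · rcases hcu with h | h
          · rw [h]; exact hu
          · rcases hck with h' | h'
            · rw [h']; exact hkA
            · exact absurd (h.symm.trans h') hku
        · rcases hcu with h | h
          · rcases hck with h' | h'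
            · exact absurd (h.symm.trans h') hku
            · rw [h']; exact hkA
          · rw [h]; exact hu
      · obtain ⟨h1, h2, h3, h4⟩ := hM''.1 f hf'
        exact ⟨h1, h2, Finset.mem_of_mem_erase (Finset.mem_of_mem_erase h3),
          Finset.mem_of_mem_erase (Finset.mem_of_mem_erase h4)⟩
    · intro f hf g hg hfg
      rcases Finset.mem_insert.1 hf with rfl | hf' <;>
        rcases Finset.mem_insert.1 hg with h | hg'
      · exact absurd h.symm hfg
      · obtain ⟨c1, c2, c3, c4⟩ := hcoords g hg'
        constructor
        · rcases hcu with h | h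
          · rw [h]; exact fun hh => c1 hh.symm
          · rcases hck with h' | h'
            · rw [h']; exact fun hh => c3 hh.symm
            · exact absurd (h.symm.trans h') hku
        refine ⟨?_, ?_, ?_⟩
        · rcases hcu with h | h
          · rw [h]; exact fun hh => c2 hh.symm
          · rcases hck with h' | h'
            · rw [h']; exact fun hh => c4 hh.symm
            · exact absurd (h.symm.trans h') hku
        · rcases hcu with h | h
          · rcases hck with h' | h'
            · exact absurd (h.symm.trans h') hku
            · rw [h']; exact fun hh => c3 hh.symm
          · rw [h]; exact fun hh => c1 hh.symm
        · rcases hcu with h | h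
          · rcases hck with h' | h'
            · exact absurd (h.symm.trans h') hku
            · rw [h']; exact fun hh => c4 hh.symm
          · rw [h]; exact fun hh => c2 hh.symm
      · obtain ⟨c1, c2, c3, c4⟩ := hcoords f hf'
        subst h
        constructor
        · rcases hcu with h | h
          · rw [h]; exact c1
          · rcases hck with h' | h'
            · rw [h']; exact c3
            · exact absurd (h.symm.trans h') hku
        refine ⟨?_, ?_, ?_⟩
        · rcases hcu with h | h
          · rcases hck with h' | h'
            · exact absurd (h.symm.trans h') hku
            · rw [h']; exact c3
          · rw [h]; exact c1
        · rcases hcu with h | h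
          · rw [h]; exact c2
          · rcases hck with h' | h'
            · rw [h']; exact c4
            · exact absurd (h.symm.trans h') hku
        · rcases hcu with h | h
          · rcases hck with h' | h'
            · exact absurd (h.symm.trans h') hku
            · rw [h']; exact c4
          · rw [h]; exact c2
      · exact hM''.2 f hf' g hg' hfg
    · exact mem_mVerts'.2 ⟨edgeOf u k, Finset.mem_insert_self _ _, hcu⟩
  · -- inverse maps into the sigma set
    intro M hM
    obtain ⟨hM', humem⟩ := Finset.mem_filter.1 hM
    have hMm := mem_matchings'.1 hM'
    obtain ⟨heM, hes⟩ := theEdge_spec humem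
    set e := theEdge u M with he
    have hlt := (hMm.1 e heM).1
    have hne : e.1 ≠ e.2 := ne_of_lt hlt
    have hlam : lam e.1 e.2 ≠ 0 := (hMm.1 e heM).2.1
    have hothers : ∀ f ∈ M.erase e, f.1 ≠ e.1 ∧ f.1 ≠ e.2 ∧ f.2 ≠ e.1 ∧ f.2 ≠ e.2 := by
      intro f hf
      obtain ⟨hfe, hfM⟩ := Finset.mem_erase.1 hf
      obtain ⟨h1, h2, h3, h4⟩ := hMm.2 f hfM e heM hfe
      exact ⟨h1, h2, h3, h4⟩
    have hkval : (otherEnd u e = e.2 ∧ e.1 = u) ∨ (otherEnd u e = e.1 ∧ e.2 = u) := by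
      rcases hes with h | h
      · exact Or.inl ⟨by rw [otherEnd, if_pos h], h⟩
      · have h1 : e.1 ≠ u := fun hh => hne (hh.trans h.symm)
        exact Or.inr ⟨by rw [otherEnd, if_neg h1], h⟩
    refine Finset.mem_sigma.2 ⟨Finset.mem_filter.2 ⟨Finset.mem_erase.2 ⟨?_, ?_⟩, ?_⟩, ?_⟩
    · rcases hkval with ⟨h, h'⟩ | ⟨h, h'⟩
      · rw [h]; exact fun hh => hne (h'.trans hh.symm)
      · rw [h]; exact fun hh => hne (hh.trans h'.symm)
    · rcases hkval with ⟨h, _⟩ | ⟨h, _⟩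
      · rw [h]; exact (hMm.1 e heM).2.2.2
      · rw [h]; exact (hMm.1 e heM).2.2.1
    · rcases hkval with ⟨h, h'⟩ | ⟨h, h'⟩
      · rw [h, ← h']; exact hlam
      · rw [h, ← h', ← hsym]; exact hlam
    · refine mem_matchings'.2 ⟨?_, ?_⟩
      · intro f hf
        obtain ⟨h1, h2, h3, h4⟩ := hothers f hf
        have hfM := Finset.mem_of_mem_erase hf
        obtain ⟨hl, hz, hA1, hA2⟩ := hMm.1 f hfM
        have hne1u : f.1 ≠ u := by
          rcases hes with h | h
          · exact fun hh => h1 (hh.trans h.symm)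
          · exact fun hh => h2 (hh.trans h.symm)
        have hne2u : f.2 ≠ u := by
          rcases hes with h | h
          · exact fun hh => h3 (hh.trans h.symm)
          · exact fun hh => h4 (hh.trans h.symm)
        have hne1k : f.1 ≠ otherEnd u e := by
          rcases hkval with ⟨h, _⟩ | ⟨h, _⟩
          · rw [h]; exact h2
          · rw [h]; exact h1
        have hne2k : f.2 ≠ otherEnd u e := by
          rcases hkval with ⟨h, _⟩ | ⟨h, _⟩
          · rw [h]; exact h4
          · rw [h]; exact h3
        exact ⟨hl, hz, Finset.mem_erase.2 ⟨hne1k, Finset.mem_erase.2 ⟨hne1u, hA1⟩⟩,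
          Finset.mem_erase.2 ⟨hne2k, Finset.mem_erase.2 ⟨hne2u, hA2⟩⟩⟩
      · intro f hf g hg hfg
        exact hMm.2 f (Finset.mem_of_mem_erase hf) g (Finset.mem_of_mem_erase hg) hfg
  · -- left inverse
    rintro ⟨k, M'⟩ hx
    dsimp only
    obtain ⟨hk, hM'⟩ := Finset.mem_sigma.1 hx
    obtain ⟨hku, hlt, hlam, hcu, hck, hnm⟩ := key k hk M' hM'
    have hM'' := mem_matchings'.1 hM'
    have humem : u ∈ mVerts (insert (edgeOf u k) M') :=
      mem_mVerts'.2 ⟨edgeOf u k, Finset.mem_insert_self _ _, hcu⟩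
    obtain ⟨heM, hes⟩ := theEdge_spec humem
    have hedge : theEdge u (insert (edgeOf u k) M') = edgeOf u k := by
      rcases Finset.mem_insert.1 heM with h | h
      · exact h
      · obtain ⟨c1, c2⟩ := coords_ne' hM'' h (v := u) (by simp)
        rcases hes with h' | h'
        · exact absurd h' c1
        · exact absurd h' c2
    have hoth : otherEnd u (edgeOf u k) = k := by
      rcases edgeOf_cases hku with ⟨h, _⟩ | ⟨h, hlt'⟩ <;> rw [h] <;>
        simp [otherEnd, (hku.symm : k ≠ u)]
    rw [hedge, hoth, Finset.erase_insert hnm]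
  · -- right inverse
    intro M hM
    dsimp only
    obtain ⟨hM', humem⟩ := Finset.mem_filter.1 hM
    have hMm := mem_matchings'.1 hM'
    obtain ⟨heM, hes⟩ := theEdge_spec humem
    set e := theEdge u M with he
    have hlt := (hMm.1 e heM).1
    have hne : e.1 ≠ e.2 := ne_of_lt hlt
    have hedge : edgeOf u (otherEnd u e) = e := by
      rcases hes with h | h
      · rw [otherEnd, if_pos h, edgeOf, if_pos (h ▸ hlt)]
        rw [← h]
      · have h1 : e.1 ≠ u := fun hh => hne (hh.trans h.symm)
        rw [otherEnd, if_neg h1, edgeOf, if_neg (not_lt.2 (le_of_lt (h ▸ hlt)))]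
        rw [← h]
    simp only [hedge]
    exact Finset.insert_erase heM
  · -- values agree
    rintro ⟨k, M'⟩ hx
    dsimp only
    obtain ⟨hk, hM'⟩ := Finset.mem_sigma.1 hx
    obtain ⟨hku, hlt, hlam, hcu, hck, hnm⟩ := key k hk M' hM'
    have hM'' := mem_matchings'.1 hM'
    have hverts : A \ mVerts (insert (edgeOf u k) M') = ((A.erase u).erase k) \ mVerts M' := by
      ext x
      simp only [Finset.mem_sdiff, Finset.mem_erase]
      constructor
      · rintro ⟨hxA, hxm⟩
        refine ⟨⟨fun h => hxm ?_, fun h => hxm ?_, hxA⟩, fun h => hxm ?_⟩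
        · exact mem_mVerts'.2 ⟨edgeOf u k, Finset.mem_insert_self _ _, by
            rcases hck with h' | h' <;> [exact Or.inl (h'.trans h.symm); exact Or.inr (h'.trans h.symm)]⟩
        · exact mem_mVerts'.2 ⟨edgeOf u k, Finset.mem_insert_self _ _, by
            rcases hcu with h' | h' <;> [exact Or.inl (h'.trans h.symm); exact Or.inr (h'.trans h.symm)]⟩
        · obtain ⟨f, hf, hor⟩ := mem_mVerts'.1 h
          exact mem_mVerts'.2 ⟨f, Finset.mem_insert_of_mem hf, hor⟩
      · rintro ⟨⟨hxk, hxu, hxA⟩, hxm⟩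
        refine ⟨hxA, fun h => ?_⟩
        obtain ⟨f, hf, hor⟩ := mem_mVerts'.1 h
        rcases Finset.mem_insert.1 hf with rfl | hf'
        · rcases hor with h' | h'
          · rcases edgeOf_cases hku with ⟨hh, _⟩ | ⟨hh, _⟩
            · rw [hh] at h'; exact hxu h'.symm
            · rw [hh] at h'; exact hxk h'.symm
          · rcases edgeOf_cases hku with ⟨hh, _⟩ | ⟨hh, _⟩
            · rw [hh] at h'; exact hxk h'.symm
            · rw [hh] at h'; exact hxu h'.symm
        · exact hxm (mem_mVerts'.2 ⟨f, hf', hor⟩)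
    have hprodlam : ∏ e ∈ insert (edgeOf u k) M', lam e.1 e.2
        = lam u k * ∏ e ∈ M', lam e.1 e.2 := by
      rw [Finset.prod_insert hnm, hlam]
    rw [hverts, hprodlam, Polynomial.C_mul]
    ring

/-- The three-term recurrence for the weighted matching polynomial. -/
lemma mu_recurrence (r : Fin n → ℝ) (lam : Fin n → Fin n → ℝ)
    (hsym : ∀ j k, lam j k = lam k j) {A : Finset (Fin n)} {u : Fin n} (hu : u ∈ A) :
    mu r lam A = (X - C (r u)) * mu r lam (A.erase u)
      + ∑ k ∈ A.erase u, C (lam u k) * mu r lam ((A.erase u).erase k) := by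
  conv_lhs => rw [mu]
  rw [← Finset.sum_filter_add_sum_filter_not (matchings lam A) (fun M => u ∉ mVerts M)]
  congr 1
  · rw [filter_matchings_eq, mu, Finset.mul_sum]
    refine Finset.sum_congr rfl fun M hM => ?_
    have hsub : mVerts M ⊆ A.erase u := mVerts_subset' (mem_matchings'.1 hM)
    have hins : A \ mVerts M = insert u ((A.erase u) \ mVerts M) := by
      ext x
      simp only [Finset.mem_sdiff, Finset.mem_insert, Finset.mem_erase]
      constructor
      · rintro ⟨hxA, hxM⟩
        by_cases hx : x = u
        · exact Or.inl hx
        · exact Or.inr ⟨⟨hx, hxA⟩, hxM⟩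
      · rintro (rfl | ⟨⟨hx, hxA⟩, hxM⟩)
        · exact ⟨hu, fun h => (Finset.mem_erase.1 (hsub h)).1 rfl⟩
        · exact ⟨hxA, hxM⟩
    rw [hins, Finset.prod_insert (by simp), mul_assoc]
  · rw [← Finset.sum_filter_add_sum_filter_not (A.erase u) (fun k => lam u k ≠ 0)]
    have h0 : ∑ k ∈ (A.erase u).filter (fun k => ¬ lam u k ≠ 0),
        C (lam u k) * mu r lam ((A.erase u).erase k) = 0 := by
      refine Finset.sum_eq_zero fun k hk => ?_
      have hk' := (Finset.mem_filter.1 hk).2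
      push_neg at hk'
      rw [hk']
      simp
    rw [h0, add_zero]
    have hexp : ∑ k ∈ (A.erase u).filter (fun k => lam u k ≠ 0),
        C (lam u k) * mu r lam ((A.erase u).erase k)
        = ∑ x ∈ ((A.erase u).filter fun k => lam u k ≠ 0).sigma
            (fun k => matchings lam ((A.erase u).erase k)),
          C (lam u x.1) *
            ((∏ i ∈ ((A.erase u).erase x.1) \ mVerts x.2, (X - C (r i))) *
              C (∏ e ∈ x.2, lam e.1 e.2)) := by
      have step : (∑ k ∈ (A.erase u).filter (fun k => lam u k ≠ 0),
            C (lam u k) * mu r lam ((A.erase u).erase k))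
          = ∑ k ∈ (A.erase u).filter (fun k => lam u k ≠ 0),
              ∑ M' ∈ matchings lam ((A.erase u).erase k),
                C (lam u k) * ((∏ i ∈ ((A.erase u).erase k) \ mVerts M', (X - C (r i))) *
                  C (∏ e ∈ M', lam e.1 e.2)) :=
        Finset.sum_congr rfl fun k _ => by rw [mu, Finset.mul_sum]
      rw [step]
      exact Finset.sum_sigma' _ _ _
    rw [hexp, part2_core r lam hsym hu]
    refine Finset.sum_congr ?_ fun M hM => rfl
    congr 1
    ext M
    simp [not_not]

lemma derivative_prod_X_sub_C (r : Fin n → ℝ) (s : Finset (Fin n)) :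
    derivative (∏ i ∈ s, (X - C (r i))) = ∑ j ∈ s, ∏ i ∈ s.erase j, (X - C (r i)) := by
  induction s using Finset.induction_on with
  | empty => simp
  | insert a s ha ih =>
    rw [Finset.prod_insert ha, derivative_mul, ih, Finset.sum_insert ha,
      Finset.erase_insert ha]
    rw [derivative_sub, derivative_X, derivative_C, sub_zero, one_mul]
    congr 1
    rw [Finset.mul_sum]
    refine Finset.sum_congr rfl fun j hj => ?_
    have hja : j ≠ a := fun h => ha (h ▸ hj)
    rw [Finset.erase_insert_of_ne hja.symm, Finset.prod_insert (fun h => ha (Finset.mem_of_mem_erase h))]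

/-- Heilmann–Lieb derivative identity. -/
lemma derivative_mu (r : Fin n → ℝ) (lam : Fin n → Fin n → ℝ) (A : Finset (Fin n)) :
    derivative (mu r lam A) = ∑ j ∈ A, mu r lam (A.erase j) := by
  rw [mu, map_sum]
  have step : ∀ M ∈ matchings lam A,
      derivative ((∏ i ∈ A \ mVerts M, (X - C (r i))) * C (∏ e ∈ M, lam e.1 e.2))
        = ∑ j ∈ A, (if j ∉ mVerts M then
            (∏ i ∈ (A.erase j) \ mVerts M, (X - C (r i))) * C (∏ e ∈ M, lam e.1 e.2)
          else 0) := by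
    intro M hM
    rw [derivative_mul, derivative_C, mul_zero, add_zero, derivative_prod_X_sub_C,
      Finset.sum_mul]
    have hfil : A \ mVerts M = A.filter (fun j => j ∉ mVerts M) := by
      ext x; simp [Finset.mem_sdiff]
    rw [hfil, Finset.sum_filter]
    refine Finset.sum_congr rfl fun j hj => ?_
    by_cases hjm : j ∉ mVerts M
    · rw [if_pos hjm, if_pos hjm]
      congr 2
      ext x
      simp only [Finset.mem_erase, Finset.mem_filter, Finset.mem_sdiff]
      constructor
      · rintro ⟨hxj, hxA, hxm⟩; exact ⟨⟨hxj, hxA⟩, hxm⟩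
      · rintro ⟨⟨hxj, hxA⟩, hxm⟩; exact ⟨hxj, hxA, hxm⟩
    · rw [if_neg hjm, if_neg hjm]
  rw [Finset.sum_congr rfl step, Finset.sum_comm]
  refine Finset.sum_congr rfl fun j hj => ?_
  rw [← Finset.sum_filter, filter_matchings_eq, mu]

/-- Positivity of the Wronskian of `mu A` and `mu (A.erase u)`. -/
lemma wronskian_nonneg (r : Fin n → ℝ) (lam : Fin n → Fin n → ℝ)
    (hsym : ∀ j k, lam j k = lam k j) (hnonpos : ∀ j k, lam j k ≤ 0) :
    ∀ N : ℕ, ∀ A : Finset (Fin n), A.card ≤ N → ∀ u ∈ A, ∀ x : ℝ,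
      ((mu r lam (A.erase u)).eval x) ^ 2 ≤
        (derivative (mu r lam A) * mu r lam (A.erase u)
          - mu r lam A * derivative (mu r lam (A.erase u))).eval x := by
  intro N
  induction N with
  | zero =>
    intro A hA u hu x
    rw [Finset.card_eq_zero.1 (Nat.le_zero.1 hA)] at hu
    exact absurd hu (Finset.notMem_empty u)
  | succ N ih =>
    intro A hA u hu x
    have hrec := mu_recurrence r lam hsym hu
    have hderiv : derivative (mu r lam A)
        = mu r lam (A.erase u) + (X - C (r u)) * derivative (mu r lam (A.erase u))
          + ∑ k ∈ A.erase u, C (lam u k) * derivative (mu r lam ((A.erase u).erase k)) := by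
      rw [hrec, derivative_add, derivative_mul, derivative_sub, derivative_X,
        derivative_C, sub_zero, one_mul, map_sum]
      congr 1
      refine Finset.sum_congr rfl fun k hk => ?_
      rw [derivative_mul, derivative_C, zero_mul, zero_add]
    have hW : derivative (mu r lam A) * mu r lam (A.erase u)
        - mu r lam A * derivative (mu r lam (A.erase u))
        = mu r lam (A.erase u) ^ 2
          + ∑ k ∈ A.erase u, C (-lam u k) *
              (derivative (mu r lam (A.erase u)) * mu r lam ((A.erase u).erase k)
                - mu r lam (A.erase u) * derivative (mu r lam ((A.erase u).erase k))) := by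
      rw [hderiv, hrec]
      have hsummand : ∀ k ∈ A.erase u, C (-lam u k) *
          (derivative (mu r lam (A.erase u)) * mu r lam ((A.erase u).erase k)
            - mu r lam (A.erase u) * derivative (mu r lam ((A.erase u).erase k)))
          = (C (lam u k) * derivative (mu r lam ((A.erase u).erase k))) * mu r lam (A.erase u)
            - (C (lam u k) * mu r lam ((A.erase u).erase k)) * derivative (mu r lam (A.erase u)) := by
        intro k hk
        rw [map_neg]
        ring
      rw [Finset.sum_congr rfl hsummand, Finset.sum_sub_distrib, ← Finset.sum_mul,
        ← Finset.sum_mul]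
      ring
    rw [hW, Polynomial.eval_add, Polynomial.eval_pow]
    have hsum : 0 ≤ (∑ k ∈ A.erase u, C (-lam u k) *
        (derivative (mu r lam (A.erase u)) * mu r lam ((A.erase u).erase k)
          - mu r lam (A.erase u) * derivative (mu r lam ((A.erase u).erase k)))).eval x := by
      rw [Polynomial.eval_finset_sum]
      refine Finset.sum_nonneg fun k hk => ?_
      rw [Polynomial.eval_mul, Polynomial.eval_C]
      have hcard : (A.erase u).card ≤ N := by
        have := Finset.card_erase_of_mem hu
        omega
      have hk' : k ∈ A.erase u := hk
      have hih := ih (A.erase u) hcard k hk' x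
      have h1 : 0 ≤ (derivative (mu r lam (A.erase u)) * mu r lam ((A.erase u).erase k)
          - mu r lam (A.erase u) * derivative (mu r lam ((A.erase u).erase k))).eval x :=
        le_trans (sq_nonneg _) hih
      exact mul_nonneg (by linarith [hnonpos u k]) h1
    linarith [hsum]

set_option maxHeartbeats 1000000 in
/-- Interlacing consequence: the multiplicity drops by at most one upon vertex deletion. -/
lemma rootMult_le (r : Fin n → ℝ) (lam : Fin n → Fin n → ℝ)
    (hsym : ∀ j k, lam j k = lam k j) (hnonpos : ∀ j k, lam j k ≤ 0)
    {A : Finset (Fin n)} {u : Fin n} (hu : u ∈ A) (θ : ℝ) :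
    (mu r lam A).rootMultiplicity θ ≤ (mu r lam (A.erase u)).rootMultiplicity θ + 1 := by
  by_contra hcon
  push_neg at hcon
  set p := mu r lam A with hpdef
  set P := mu r lam (A.erase u) with hPdef
  set a := p.rootMultiplicity θ with hadef
  set b := P.rootMultiplicity θ with hbdef
  have hp : p ≠ 0 := mu_ne_zero r lam A
  have hP : P ≠ 0 := mu_ne_zero r lam (A.erase u)
  set g := P /ₘ (X - C θ) ^ b with hgdef
  have hPg : (X - C θ) ^ b * g = P := P.pow_mul_divByMonic_rootMultiplicity_eq θ
  have hgθ : g.eval θ ≠ 0 := Polynomial.eval_divByMonic_pow_rootMultiplicity_ne_zero θ hP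
  set W := derivative p * P - p * derivative P with hWdef
  have hWnn : ∀ x : ℝ, (P.eval x) ^ 2 ≤ W.eval x :=
    fun x => wronskian_nonneg r lam hsym hnonpos A.card A le_rfl u hu x
  obtain ⟨d, hd⟩ : ∃ d, a = b + 1 + d + 1 := ⟨a - (b + 2), by omega⟩
  obtain ⟨f, hf⟩ := p.pow_rootMultiplicity_dvd θ
  rw [← hadef, hd] at hf
  have hdp : (X - C θ) ^ (b + 1) ∣ derivative p := by
    rw [hf, derivative_mul, derivative_pow_succ, derivative_sub, derivative_X,
      derivative_C, sub_zero, mul_one]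
    exact dvd_add (((pow_dvd_pow _ (by omega)).mul_left _).mul_right _)
      ((pow_dvd_pow _ (by omega)).mul_right _)
  have hdvd : (X - C θ) ^ (2 * b + 1) ∣ W := by
    refine dvd_sub ?_ ?_
    · have h1 : (X - C θ) ^ (b + 1) * (X - C θ) ^ b ∣ derivative p * P :=
        mul_dvd_mul hdp (P.pow_rootMultiplicity_dvd θ)
      rwa [← pow_add, show b + 1 + b = 2 * b + 1 by omega] at h1
    · rcases Nat.eq_zero_or_pos b with hb | hb
      · have h1 : (X - C θ) ∣ p := by
          rw [hf]
          exact (dvd_pow_self _ (Nat.succ_ne_zero _)).mul_right _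
        rw [hb]
        simpa using h1.mul_right _
      · obtain ⟨c, hc⟩ : ∃ c, b = c + 1 := ⟨b - 1, by omega⟩
        have hdP : (X - C θ) ^ c ∣ derivative P := by
          rw [← hPg, hc, derivative_mul, derivative_pow_succ, derivative_sub,
            derivative_X, derivative_C, sub_zero, mul_one]
          exact dvd_add ((dvd_refl _).mul_left _ |>.mul_right _)
            ((pow_dvd_pow _ (Nat.le_succ _)).mul_right _)
        have h2 : (X - C θ) ^ (b + 1 + d + 1) * (X - C θ) ^ c ∣ p * derivative P :=
          mul_dvd_mul (by rw [hf]; exact Dvd.intro _ rfl) hdP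
        rw [← pow_add] at h2
        refine (pow_dvd_pow _ ?_).trans h2
        rw [hc]
        omega
  obtain ⟨h, hh⟩ := hdvd
  -- pointwise inequality away from θ
  have hkey : ∀ x : ℝ, x ≠ θ → 0 ≤ ((X - C θ) * h - g ^ 2).eval x := by
    intro x hx
    have h1 := hWnn x
    have hPx : P.eval x = (x - θ) ^ b * g.eval x := by
      rw [← hPg]; simp [Polynomial.eval_mul, Polynomial.eval_pow]
    have hWx : W.eval x = (x - θ) ^ (2 * b + 1) * h.eval x := by
      rw [hh]; simp [Polynomial.eval_mul, Polynomial.eval_pow]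
    rw [hPx, hWx] at h1
    have hpos : 0 < ((x - θ) ^ b) ^ 2 := by
      have : (x - θ) ^ b ≠ 0 := pow_ne_zero _ (sub_ne_zero.2 hx)
      positivity
    have h2 : ((x - θ) ^ b) ^ 2 * (g.eval x) ^ 2
        ≤ ((x - θ) ^ b) ^ 2 * ((x - θ) * h.eval x) := by
      calc ((x - θ) ^ b) ^ 2 * (g.eval x) ^ 2 = ((x - θ) ^ b * g.eval x) ^ 2 := by ring
        _ ≤ (x - θ) ^ (2 * b + 1) * h.eval x := h1
        _ = ((x - θ) ^ b) ^ 2 * ((x - θ) * h.eval x) := by ring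
    have h3 := (mul_le_mul_iff_right₀ hpos).1 h2
    simp only [Polynomial.eval_sub, Polynomial.eval_mul, Polynomial.eval_pow,
      Polynomial.eval_X, Polynomial.eval_C]
    linarith
  -- pass to the limit x → θ
  have h0 : 0 ≤ ((X - C θ) * h - g ^ 2).eval θ := by
    have htend : Filter.Tendsto (fun x : ℝ => ((X - C θ) * h - g ^ 2).eval x)
        (nhdsWithin θ {θ}ᶜ) (nhds (((X - C θ) * h - g ^ 2).eval θ)) :=
      (((X - C θ) * h - g ^ 2).continuous.tendsto θ).mono_left nhdsWithin_le_nhds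
    refine ge_of_tendsto htend ?_
    filter_upwards [self_mem_nhdsWithin] with x hx
    exact hkey x hx
  have : ((X - C θ) * h - g ^ 2).eval θ = -(g.eval θ) ^ 2 := by
    simp [Polynomial.eval_mul, Polynomial.eval_sub]
  rw [this] at h0
  have hz : (g.eval θ) ^ 2 = 0 := le_antisymm (by linarith) (sq_nonneg _)
  exact hgθ ((pow_eq_zero_iff (by norm_num : (2:ℕ) ≠ 0)).1 hz)

end StmtSevenAux

/-- `θ` is a root of `μ(G)` iff there is a θ-essential vertex, i.e. a vertex
`j` with `m_θ(G∖j) = m_θ(G) − 1`. -/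
theorem stmt_7 (n : ℕ) (hn : 0 < n) (r : Fin n → ℝ) (lam : Fin n → Fin n → ℝ)
    (hsym : ∀ j k, lam j k = lam k j) (hnonpos : ∀ j k, lam j k ≤ 0)
    (hdiag : ∀ i, lam i i = 0) (θ : ℝ) :
    (mu r lam (Finset.univ : Finset (Fin n))).IsRoot θ ↔
      ∃ j : Fin n, (mu r lam Finset.univ).rootMultiplicity θ =
        (mu r lam (Finset.univ.erase j)).rootMultiplicity θ + 1 := by
  have hp : mu r lam (Finset.univ : Finset (Fin n)) ≠ 0 := mu_ne_zero r lam _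
  constructor
  · intro hroot
    have ha : 1 ≤ (mu r lam (Finset.univ : Finset (Fin n))).rootMultiplicity θ :=
      (Polynomial.rootMultiplicity_pos hp).2 hroot
    by_contra hcon
    push_neg at hcon
    have hge : ∀ j : Fin n, (mu r lam (Finset.univ : Finset (Fin n))).rootMultiplicity θ
        ≤ (mu r lam (Finset.univ.erase j)).rootMultiplicity θ := by
      intro j
      have h1 := rootMult_le r lam hsym hnonpos (Finset.mem_univ j) θ
      have h2 := hcon j
      omega
    have hdvd : (X - C θ) ^ ((mu r lam (Finset.univ : Finset (Fin n))).rootMultiplicity θ)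
        ∣ derivative (mu r lam (Finset.univ : Finset (Fin n))) := by
      rw [derivative_mu]
      exact Finset.dvd_sum fun j _ =>
        dvd_trans (pow_dvd_pow _ (hge j)) ((mu r lam (Finset.univ.erase j)).pow_rootMultiplicity_dvd θ)
    have hndeg : (mu r lam (Finset.univ : Finset (Fin n))).natDegree = n := by
      have := mu_degree r lam (Finset.univ : Finset (Fin n))
      rw [Finset.card_univ, Fintype.card_fin] at this
      exact Polynomial.natDegree_eq_of_degree_eq_some this
    have hd0 : derivative (mu r lam (Finset.univ : Finset (Fin n))) ≠ 0 := by
      intro hzero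
      have hc : (derivative (mu r lam (Finset.univ : Finset (Fin n)))).coeff (n - 1)
          = (mu r lam (Finset.univ : Finset (Fin n))).coeff (n - 1 + 1) * ((n - 1 : ℕ) + 1) :=
        Polynomial.coeff_derivative _ _
      have hn1 : n - 1 + 1 = n := Nat.succ_pred_eq_of_pos hn
      rw [hzero, Polynomial.coeff_zero, hn1] at hc
      have hlead : (mu r lam (Finset.univ : Finset (Fin n))).coeff n = 1 := by
        have hm := mu_monic r lam (Finset.univ : Finset (Fin n))
        have := hm.coeff_natDegree
        rwa [hndeg] at this
      rw [hlead, one_mul] at hc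
      have : ((n - 1 : ℕ) : ℝ) + 1 ≠ 0 := by positivity
      exact this hc.symm
    have hmult := Polynomial.derivative_rootMultiplicity_of_root hroot
    have hle := (Polynomial.le_rootMultiplicity_iff hd0).2 hdvd
    omega
  · rintro ⟨j, hj⟩
    have : 0 < (mu r lam (Finset.univ : Finset (Fin n))).rootMultiplicity θ := by omega
    exact (Polynomial.rootMultiplicity_pos hp).1 this
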